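/- Disintegration formula for the treated subdistribution (unconditional form of the display proved in the paper's Lemma S.3(ii)): under the nonseparable duration model with U unit exponential, letting κ denote the conditional distribution of Z given U, for every v ≥ 0: P(T ≤ φ₁(Z,v) and Z ≤ T) = ∫₀^{v} κ(u)( [0, φ₀(u)] ) · exp(−u) du. -/

import Mathlib

open MeasureTheory ProbabilityTheory Set
open scoped ENNReal

/-- Disintegration formula for the treated subdistribution (unconditional form of the
display in the paper's Lemma S.3(ii)): with `κ` the conditional distribution of `Z`
given `U` and `U` unit exponential,
`P(T ≤ φ₁(Z,v), Z ≤ T) = ∫₀^v κ(u)([0,φ₀(u)]) e^{−u} du`. -/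
theorem disintegration_treated
    {Ω : Type*} [MeasureSpace Ω] [IsProbabilityMeasure (ℙ : Measure Ω)]
    (T Z U W : Ω → ℝ)
    (hT : Measurable T) (hZ : Measurable Z) (hU : Measurable U) (hW : Measurable W)
    (hTnn : ∀ ω, 0 ≤ T ω) (hZnn : ∀ ω, 0 ≤ Z ω) (hUnn : ∀ ω, 0 ≤ U ω)
    (φ0 φ0inv : ℝ → ℝ) (φ1 : ℝ → ℝ → ℝ)
    (hφ0mono : StrictMonoOn φ0 (Set.Ici 0))
    (hφ0nn : ∀ u, 0 ≤ u → 0 ≤ φ0 u)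
    (hφ0invnn : ∀ t, 0 ≤ t → 0 ≤ φ0inv t)
    (hφ0inv1 : ∀ u, 0 ≤ u → φ0inv (φ0 u) = u)
    (hφ0inv2 : ∀ t, 0 ≤ t → φ0 (φ0inv t) = t)
    (hφ1meas : Measurable fun p : ℝ × ℝ => φ1 p.1 p.2)
    (hφ1nn : ∀ z u, 0 ≤ z → 0 ≤ u → 0 ≤ φ1 z u)
    (hφ1mono : ∀ z, 0 ≤ z → StrictMonoOn (φ1 z) (Set.Ici 0))
    (hφ1fix : ∀ z, 0 ≤ z → φ1 z (φ0inv z) = z)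
    (hmodel : ∀ᵐ ω ∂ℙ, (φ0 (U ω) < Z ω → T ω = φ0 (U ω)) ∧
      (Z ω ≤ φ0 (U ω) → T ω = φ1 (Z ω) (U ω)))
    (hUexp : ∀ u, 0 ≤ u → ℙ {ω | U ω ≤ u} = ENNReal.ofReal (1 - Real.exp (-u))) :
    ∀ t, 0 ≤ t →
    ∀ v, 0 ≤ v →
      (ℙ {ω | T ω ≤ φ1 (Z ω) v ∧ Z ω ≤ T ω}).toReal
        = ∫ u in (0:ℝ)..v,
            (condDistrib Z U ℙ u (Set.Icc 0 (φ0 u))).toReal * Real.exp (-u) := by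
  
  intro t ht v hv
  -- measurable monotone extension of φ0
  set ψ : ℝ → ℝ := fun u => φ0 (max u 0) with hψdef
  have hψmono : Monotone ψ := fun a b hab =>
    hφ0mono.monotoneOn (le_max_right a 0) (le_max_right b 0) (max_le_max hab le_rfl)
  have hψmeas : Measurable ψ := hψmono.measurable
  have hψeq : ∀ u, 0 ≤ u → ψ u = φ0 u := fun u hu => by
    simp only [hψdef, max_eq_left hu]
  -- Step 1: event rewriting
  have hAB : ℙ {ω | T ω ≤ φ1 (Z ω) v ∧ Z ω ≤ T ω}
      = ℙ {ω | Z ω ≤ φ0 (U ω) ∧ U ω ≤ v} := by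
    apply measure_congr
    rw [Filter.eventuallyEq_set]
    filter_upwards [hmodel] with ω hω
    show _ ↔ _
    constructor
    · rintro ⟨h1, h2⟩
      have hZφ : Z ω ≤ φ0 (U ω) := by
        by_contra h
        push_neg at h
        have hTe := hω.1 h
        exact absurd (h2.trans_lt (hTe ▸ h)) (lt_irrefl _)
      have hTe := hω.2 hZφ
      refine ⟨hZφ, ?_⟩
      by_contra h
      push_neg at h
      have := (hφ1mono _ (hZnn ω)) hv (hUnn ω) h
      rw [← hTe] at this
      exact absurd (h1.trans_lt this) (lt_irrefl _)
    · rintro ⟨h1, h2⟩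
      have hTe := hω.2 h1
      have hinv : φ0inv (Z ω) ≤ U ω := by
        by_contra h
        push_neg at h
        have := hφ0mono (hUnn ω) (hφ0invnn _ (hZnn ω)) h
        rw [hφ0inv2 _ (hZnn ω)] at this
        exact absurd (h1.trans_lt this) (lt_irrefl _)
      constructor
      · rw [hTe]
        exact (hφ1mono _ (hZnn ω)).monotoneOn (hUnn ω) hv h2
      · rw [hTe]
        calc Z ω = φ1 (Z ω) (φ0inv (Z ω)) := (hφ1fix _ (hZnn ω)).symm
          _ ≤ φ1 (Z ω) (U ω) :=
            (hφ1mono _ (hZnn ω)).monotoneOn (hφ0invnn _ (hZnn ω)) (hUnn ω) hinv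
  rw [hAB]
  -- Step 2: disintegration via condDistrib
  have hpair : Measurable fun ω => (U ω, Z ω) := hU.prodMk hZ
  have hdis : ((ℙ : Measure Ω).map U) ⊗ₘ condDistrib Z U ℙ = (ℙ : Measure Ω).map (fun ω => (U ω, Z ω)) := by
    rw [condDistrib_def, ← Measure.fst_map_prodMk (X := U) hZ]
    exact Measure.disintegrate _ _
  set S' : Set (ℝ × ℝ) := {p | 0 ≤ p.2 ∧ p.2 ≤ ψ p.1} with hS'def
  have hS'meas : MeasurableSet S' :=
    (measurableSet_le measurable_const measurable_snd).inter
      (measurableSet_le measurable_snd (hψmeas.comp measurable_fst))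
  set S : Set (ℝ × ℝ) := S' ∩ {p | p.1 ≤ v} with hSdef
  have hSmeas : MeasurableSet S :=
    hS'meas.inter (measurableSet_le measurable_fst measurable_const)
  have hpre : (fun ω => (U ω, Z ω)) ⁻¹' S = {ω | Z ω ≤ φ0 (U ω) ∧ U ω ≤ v} := by
    ext ω
    simp only [hSdef, hS'def, Set.mem_preimage, Set.mem_inter_iff, Set.mem_setOf_eq,
      hψeq _ (hUnn ω)]
    exact ⟨fun h => ⟨h.1.2, h.2⟩, fun h => ⟨⟨hZnn ω, h.1⟩, h.2⟩⟩
  have hmap : ℙ {ω | Z ω ≤ φ0 (U ω) ∧ U ω ≤ v}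
      = ∫⁻ u in Set.Iic v, condDistrib Z U ℙ u (Set.Icc 0 (ψ u)) ∂((ℙ : Measure Ω).map U) := by
    rw [← hpre, ← Measure.map_apply hpair hSmeas, ← hdis, Measure.compProd_apply hSmeas]
    have : (fun u => condDistrib Z U ℙ u (Prod.mk u ⁻¹' S))
        = (Set.Iic v).indicator (fun u => condDistrib Z U ℙ u (Set.Icc 0 (ψ u))) := by
      funext u
      by_cases huv : u ≤ v
      · rw [Set.indicator_of_mem (Set.mem_Iic.mpr huv)]
        congr 1
        ext z
        simp only [hSdef, hS'def, Set.mem_preimage, Set.mem_inter_iff, Set.mem_setOf_eq,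
          Set.mem_Icc]
        tauto
      · rw [Set.indicator_of_notMem (by simpa using huv)]
        have : Prod.mk u ⁻¹' S = ∅ := by
          ext z
          simp only [hSdef, Set.mem_preimage, Set.mem_inter_iff, Set.mem_setOf_eq,
            Set.mem_empty_iff_false, iff_false]
          tauto
        simp [this]
    rw [this, lintegral_indicator measurableSet_Iic]
  rw [hmap]
  -- Step 3: law of U is exponential
  set d : ℝ → ℝ≥0∞ := (Set.Ici (0:ℝ)).indicator (fun u => ENNReal.ofReal (Real.exp (-u)))
    with hddef
  have hdmeas : Measurable d :=
    (ENNReal.measurable_ofReal.comp (Real.measurable_exp.comp measurable_neg)).indicator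
      measurableSet_Ici
  have hexp_int : ∀ a : ℝ, ∫⁻ x in Set.Icc 0 a, ENNReal.ofReal (Real.exp (-x))
      = ENNReal.ofReal (1 - Real.exp (-a)) := by
    intro a
    have hcont : Continuous fun x : ℝ => Real.exp (-x) := by continuity
    rcases le_or_gt 0 a with ha | ha
    · rw [← ofReal_integral_eq_lintegral_ofReal hcont.integrableOn_Icc
        (Filter.Eventually.of_forall fun x => (Real.exp_pos _).le)]
      congr 1
      rw [integral_Icc_eq_integral_Ioc, ← intervalIntegral.integral_of_le ha]
      rw [intervalIntegral.integral_comp_neg (fun x => Real.exp x)]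
      rw [integral_exp]
      simp
    · rw [Set.Icc_eq_empty (by linarith)]
      have hle : (1:ℝ) ≤ Real.exp (-a) := by
        rw [← Real.exp_zero]; exact Real.exp_le_exp.mpr (by linarith)
      simp [ENNReal.ofReal_eq_zero.mpr (sub_nonpos.mpr hle)]
  have hlaw : (ℙ : Measure Ω).map U = volume.withDensity d := by
    have : IsProbabilityMeasure ((ℙ : Measure Ω).map U) := Measure.isProbabilityMeasure_map hU.aemeasurable
    refine Measure.ext_of_Iic _ _ fun a => ?_
    rw [Measure.map_apply hU measurableSet_Iic, withDensity_apply _ measurableSet_Iic]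
    have hIcc : Set.Iic a ∩ Set.Ici (0:ℝ) = Set.Icc 0 a := by
      rw [Set.inter_comm]; rfl
    rw [← lintegral_indicator measurableSet_Iic, Set.indicator_indicator, hIcc,
      lintegral_indicator measurableSet_Icc, hexp_int a]
    rcases le_or_gt 0 a with ha | ha
    · exact hUexp a ha
    · have : U ⁻¹' Set.Iic a = ∅ := by
        ext ω; simp only [Set.mem_preimage, Set.mem_Iic, Set.mem_empty_iff_false, iff_false]
        push_neg; exact ha.trans_le (hUnn ω)
      rw [this]
      have hle : (1:ℝ) ≤ Real.exp (-a) := by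
        rw [← Real.exp_zero]; exact Real.exp_le_exp.mpr (by linarith)
      simp [ENNReal.ofReal_eq_zero.mpr (sub_nonpos.mpr hle)]
  rw [hlaw]
  -- Step 4: compute
  have hκmeas : Measurable fun u => condDistrib Z U ℙ u (Set.Icc 0 (ψ u)) := by
    have h := Kernel.measurable_kernel_prodMk_left (κ := condDistrib Z U ℙ) hS'meas
    have heq : ∀ u : ℝ, Prod.mk u ⁻¹' S' = Set.Icc 0 (ψ u) := by
      intro u; ext z
      simp only [hS'def, Set.mem_Icc, Set.mem_setOf_eq, Set.mem_preimage]
    simpa only [heq] using h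
  rw [setLIntegral_withDensity_eq_setLIntegral_mul _ hdmeas hκmeas measurableSet_Iic]
  have hind : ∀ u, (d * fun u => condDistrib Z U ℙ u (Set.Icc 0 (ψ u))) u
      = (Set.Ici (0:ℝ)).indicator
          (fun u => ENNReal.ofReal (Real.exp (-u)) * condDistrib Z U ℙ u (Set.Icc 0 (ψ u))) u := by
    intro u
    simp only [Pi.mul_apply, hddef]
    by_cases hu : u ∈ Set.Ici (0:ℝ)
    · rw [Set.indicator_of_mem hu, Set.indicator_of_mem hu]
    · rw [Set.indicator_of_notMem hu, Set.indicator_of_notMem hu, zero_mul]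
  have hIcc : Set.Iic v ∩ Set.Ici (0:ℝ) = Set.Icc 0 v := by
    rw [Set.inter_comm]; rfl
  rw [lintegral_congr hind, ← lintegral_indicator measurableSet_Iic, Set.indicator_indicator,
    hIcc, lintegral_indicator measurableSet_Icc,
    setLIntegral_congr (μ := volume) (Ioc_ae_eq_Icc (a := (0:ℝ)) (b := v)).symm]
  -- convert lintegral to integral
  have hfm : Measurable fun u => ENNReal.ofReal (Real.exp (-u))
      * condDistrib Z U ℙ u (Set.Icc 0 (ψ u)) :=
    (ENNReal.measurable_ofReal.comp (Real.measurable_exp.comp measurable_neg)).mul hκmeas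
  rw [← integral_toReal (hfm.aemeasurable.restrict)
    (Filter.Eventually.of_forall fun u => by
      exact ENNReal.mul_lt_top ENNReal.ofReal_lt_top (measure_lt_top _ _) )]
  rw [intervalIntegral.integral_of_le hv]
  refine setIntegral_congr_fun measurableSet_Ioc fun u hu => ?_
  rw [ENNReal.toReal_mul, ENNReal.toReal_ofReal (Real.exp_pos _).le,
    hψeq u hu.1.le, mul_comm]
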